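/- Consider the generalized top-k selective gossiping trajectory with m ≥ 2 agents, n ≥ 1 candidates, and k ∈ [n], assume the connectivity graph G = ([m], E) is connected, and let X(∞) = lim_{t→∞} X(t) denote the (existing) entrywise limit. Then for any two edges {i₁,i₂} ∈ E and {i₁′,i₂′} ∈ E, one has α_{i₁i₂} = α_{i₁′i₂′}; that is, the minimum limiting value over the infinitely-often discussed candidates is independent of the choice of communicating pair. -/

import Mathlib

open Filter Topology

/-- The set of indices of the top-k entries of v: indices j for which fewer
than k entries of v are strictly greater than v j. -/
def topSet {n : ℕ} (k : ℕ) (v : Fin n → ℝ) : Set (Fin n) :=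
  {j | Set.ncard {l | v j < v l} < k}

lemma topSet_card_ge {n k : ℕ} (hkn : k ≤ n) (v : Fin n → ℝ) : k ≤ (topSet k v).ncard := by
  rcases Nat.eq_zero_or_pos k with rfl | hk
  · exact Nat.zero_le _
  have hmono := Tuple.monotone_sort v
  set σ := Tuple.sort v with hσ
  have hsub : σ '' {i : Fin n | n - k ≤ (i : ℕ)} ⊆ topSet k v := by
    rintro _ ⟨i, hi, rfl⟩
    have hin : n - k ≤ (i : ℕ) := hi
    have hQ : {l | v (σ i) < v l} ⊆ σ '' {i' : Fin n | i < i'} := by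
      intro l hl
      have hl' : v (σ i) < v l := hl
      refine ⟨σ.symm l, ?_, Equiv.apply_symm_apply σ l⟩
      show i < σ.symm l
      by_contra hle
      push_neg at hle
      have h2 : (v ∘ σ) (σ.symm l) ≤ (v ∘ σ) i := hmono hle
      simp only [Function.comp_apply, Equiv.apply_symm_apply] at h2
      exact absurd hl' (not_lt.mpr h2)
    have h1 : {l | v (σ i) < v l}.ncard ≤ (σ '' {i' : Fin n | i < i'}).ncard :=
      Set.ncard_le_ncard hQ (Set.toFinite _)
    have h2 : (σ '' {i' : Fin n | i < i'}).ncard = n - 1 - (i : ℕ) := by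
      rw [Set.ncard_image_of_injective _ σ.injective]
      have he : {i' : Fin n | i < i'} = ↑(Finset.Ioi i) := by
        ext x; simp
      rw [he, Set.ncard_coe_finset, Fin.card_Ioi]
    have hilt : (i : ℕ) < n := i.isLt
    show {l | v (σ i) < v l}.ncard < k
    omega
  have hcard : (σ '' {i : Fin n | n - k ≤ (i : ℕ)}).ncard = k := by
    rw [Set.ncard_image_of_injective _ σ.injective]
    have hnk : n - k < n := by omega
    have he : {i : Fin n | n - k ≤ (i : ℕ)} = ↑(Finset.Ici (⟨n - k, hnk⟩ : Fin n)) := by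
      ext x
      simp [Fin.le_def]
    rw [he, Set.ncard_coe_finset, Fin.card_Ici]
    show n - (n - k) = k
    omega
  calc k = _ := hcard.symm
    _ ≤ (topSet k v).ncard := Set.ncard_le_ncard hsub (Set.toFinite _)

lemma topSet_nonempty {n k : ℕ} (hk : 1 ≤ k) (hkn : k ≤ n) (v : Fin n → ℝ) :
    (topSet k v).Nonempty := by
  have := topSet_card_ge hkn v
  exact Set.nonempty_of_ncard_ne_zero (by omega)

lemma pigeon {ι : Type*} [Finite ι] {T : Set ℕ} (hT : T.Infinite) (P : ι → ℕ → Prop)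
    (h : ∀ t ∈ T, ∃ i, P i t) : ∃ i, {t | t ∈ T ∧ P i t}.Infinite := by
  by_contra hc
  push_neg at hc
  have hsub : T ⊆ ⋃ i, {t | t ∈ T ∧ P i t} := fun t ht => by
    obtain ⟨i, hi⟩ := h t ht
    exact Set.mem_iUnion.mpr ⟨i, ht, hi⟩
  exact hT ((Set.finite_iUnion hc).subset hsub)

lemma evLemma {ι : Type*} [Finite ι] (T : Set ℕ) (P : ι → ℕ → Prop) :
    ∃ N, ∀ t, N ≤ t → t ∈ T → ∀ i, P i t → {s | s ∈ T ∧ P i s}.Infinite := by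
  classical
  have hU : (⋃ i ∈ {i : ι | ¬ {s | s ∈ T ∧ P i s}.Infinite}, {s | s ∈ T ∧ P i s}).Finite :=
    Set.Finite.biUnion (Set.toFinite _) fun i hi => Set.not_infinite.mp hi
  obtain ⟨N, hN⟩ := hU.bddAbove
  refine ⟨N + 1, fun t ht htT i hP => ?_⟩
  by_contra hinf
  have hmem : t ∈ ⋃ i ∈ {i : ι | ¬ {s | s ∈ T ∧ P i s}.Infinite}, {s | s ∈ T ∧ P i s} :=
    Set.mem_biUnion hinf ⟨htT, hP⟩
  have := hN hmem
  omega

lemma limEq {T : Set ℕ} (hT : T.Infinite) {f g : ℕ → ℝ} {L L' : ℝ}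
    (hf : Tendsto f atTop (𝓝 L)) (hg : Tendsto g atTop (𝓝 L'))
    (h : ∀ t ∈ T, f t = g t) : L = L' := by
  have hne : ((atTop : Filter ℕ) ⊓ 𝓟 T).NeBot := by
    rw [← Nat.cofinite_eq_atTop]
    exact hT.cofinite_inf_principal_neBot
  refine tendsto_nhds_unique (l := atTop ⊓ 𝓟 T) ?_ (hg.mono_left inf_le_left)
  exact ((hf.mono_left inf_le_left).congr'
    (eventually_inf_principal.mpr (Eventually.of_forall h)))

lemma lemA {n k : ℕ} {Y : ℕ → Fin n → ℝ} {w : Fin n → ℝ}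
    (hlim : ∀ j, Tendsto (fun t => Y t j) atTop (𝓝 (w j)))
    {T : Set ℕ} (hT : T.Infinite) {j : Fin n}
    (h : ∀ t ∈ T, j ∈ topSet k (Y t)) : j ∈ topSet k w := by
  have hev : ∀ᶠ t in (atTop : Filter ℕ), ∀ l : Fin n, w j < w l → Y t j < Y t l := by
    rw [eventually_all]
    intro l
    rcases lt_or_ge (w j) (w l) with hlt | hle
    · filter_upwards [(hlim j).eventually_lt (hlim l) hlt] with t ht _
      exact ht
    · filter_upwards with t hcon
      exact absurd hcon (not_lt.mpr hle)
  obtain ⟨N, hN⟩ := eventually_atTop.mp hev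
  obtain ⟨t, htT, htN⟩ := hT.exists_gt N
  have hsub : {l | w j < w l} ⊆ {l | Y t j < Y t l} := fun l hl => hN t htN.le l hl
  have ht := h t htT
  show {l | w j < w l}.ncard < k
  exact lt_of_le_of_lt (Set.ncard_le_ncard hsub (Set.toFinite _)) ht

def Tset {m : ℕ} (p q : ℕ → Fin m) (a b : Fin m) : Set ℕ :=
  {t | (p t = a ∧ q t = b) ∨ (p t = b ∧ q t = a)}

def SfSet {m n : ℕ} (p q : ℕ → Fin m) (S : ℕ → Set (Fin n)) (a b : Fin m) : Set (Fin n) :=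
  {j | {t | t ∈ Tset p q a b ∧ j ∈ S t}.Infinite}

noncomputable def alphaVal {m n : ℕ} (p q : ℕ → Fin m) (S : ℕ → Set (Fin n))
    (Xinf : Fin m → Fin n → ℝ) (a b : Fin m) : ℝ :=
  sInf ((fun j => Xinf a j) '' SfSet p q S a b)

section Main

variable {m n k : ℕ} {p q : ℕ → Fin m} {X : ℕ → Fin m → Fin n → ℝ}
  {S : ℕ → Set (Fin n)} {Xinf : Fin m → Fin n → ℝ}

lemma Tset_symm (a b : Fin m) : Tset p q a b = Tset p q b a :=
  Set.ext fun _ => or_comm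

lemma Sf_symm (a b : Fin m) : SfSet p q S a b = SfSet p q S b a := by
  unfold SfSet
  rw [Tset_symm]

lemma topSub (hS : ∀ t, S t = topSet k (X t (p t)) ∪ topSet k (X t (q t)))
    {a b : Fin m} {t : ℕ} (ht : t ∈ Tset p q a b) : topSet k (X t a) ⊆ S t := by
  have ht' : (p t = a ∧ q t = b) ∨ (p t = b ∧ q t = a) := ht
  rw [hS t]
  rcases ht' with ⟨hp, _⟩ | ⟨_, hq⟩
  · rw [hp]; exact Set.subset_union_left
  · rw [hq]; exact Set.subset_union_right

lemma S_eq (hS : ∀ t, S t = topSet k (X t (p t)) ∪ topSet k (X t (q t)))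
    {a b : Fin m} {t : ℕ} (ht : t ∈ Tset p q a b) :
    S t = topSet k (X t a) ∪ topSet k (X t b) := by
  have ht' : (p t = a ∧ q t = b) ∨ (p t = b ∧ q t = a) := ht
  rcases ht' with ⟨hp, hq⟩ | ⟨hp, hq⟩
  · rw [hS t, hp, hq]
  · rw [hS t, hp, hq, Set.union_comm]

lemma eqOnSf
    (hX1 : ∀ t (i : Fin m) (j : Fin n), (i = p t ∨ i = q t) → j ∈ S t →
      X (t + 1) i j = (X t (p t) j + X t (q t) j) / 2)
    (hlim : ∀ (i : Fin m) (j : Fin n),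
      Tendsto (fun t => X t i j) atTop (𝓝 (Xinf i j)))
    {a b : Fin m} {j : Fin n} (hj : j ∈ SfSet p q S a b) : Xinf a j = Xinf b j := by
  have hj' : {t | t ∈ Tset p q a b ∧ j ∈ S t}.Infinite := hj
  refine limEq hj' ((hlim a j).comp (tendsto_add_atTop_nat 1))
    ((hlim b j).comp (tendsto_add_atTop_nat 1)) ?_
  intro t ht
  obtain ⟨htT, htS⟩ := ht
  have ht' : (p t = a ∧ q t = b) ∨ (p t = b ∧ q t = a) := htT
  have ha : a = p t ∨ a = q t := by
    rcases ht' with ⟨h1, _⟩ | ⟨_, h2⟩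
    exacts [Or.inl h1.symm, Or.inr h2.symm]
  have hb : b = p t ∨ b = q t := by
    rcases ht' with ⟨_, h2⟩ | ⟨h1, _⟩
    exacts [Or.inr h2.symm, Or.inl h1.symm]
  show X (t + 1) a j = X (t + 1) b j
  rw [hX1 t a j ha htS, hX1 t b j hb htS]

lemma Sf_nonempty (hk : 1 ≤ k) (hkn : k ≤ n)
    (hS : ∀ t, S t = topSet k (X t (p t)) ∪ topSet k (X t (q t)))
    {a b : Fin m} (hab : (Tset p q a b).Infinite) : (SfSet p q S a b).Nonempty := by
  obtain ⟨j, hj⟩ := pigeon hab (fun (j : Fin n) t => j ∈ S t) (fun t _ => by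
    obtain ⟨j, hj⟩ := topSet_nonempty hk hkn (X t (p t))
    exact ⟨j, show j ∈ S t from by rw [hS t]; exact Set.mem_union_left _ hj⟩)
  exact ⟨j, hj⟩

lemma bigStep (hk : 1 ≤ k) (hkn : k ≤ n)
    (hS : ∀ t, S t = topSet k (X t (p t)) ∪ topSet k (X t (q t)))
    (hX1 : ∀ t (i : Fin m) (j : Fin n), (i = p t ∨ i = q t) → j ∈ S t →
      X (t + 1) i j = (X t (p t) j + X t (q t) j) / 2)
    (hlim : ∀ (i : Fin m) (j : Fin n),
      Tendsto (fun t => X t i j) atTop (𝓝 (Xinf i j)))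
    {a b c : Fin m} (hab : (Tset p q a b).Infinite) (hac : (Tset p q a c).Infinite) :
    alphaVal p q S Xinf a b ≤ alphaVal p q S Xinf a c := by
  classical
  by_cases hex : ∃ j ∈ SfSet p q S a b, Xinf a j ≤ alphaVal p q S Xinf a c
  · obtain ⟨j, hjb, hle⟩ := hex
    refine le_trans (csInf_le (Set.Finite.bddBelow (Set.toFinite _)) ?_) hle
    exact ⟨j, hjb, rfl⟩
  · push_neg at hex
    exfalso
    set w := alphaVal p q S Xinf a c with hw
    -- the infimum is attained at some j' ∈ SfSet a c
    have hmem : w ∈ (fun j => Xinf a j) '' SfSet p q S a c :=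
      Set.Nonempty.csInf_mem ((Sf_nonempty hk hkn hS hac).image _) (Set.toFinite _)
    obtain ⟨j', hj'c, hv⟩ := hmem
    have hv' : Xinf a j' = w := hv
    -- Step 1 : at least k coordinates of row a have limit > w
    have hstep1 : k ≤ {l | w < Xinf a l}.ncard := by
      obtain ⟨N, hN⟩ := evLemma (Tset p q a b) (fun (j : Fin n) t => j ∈ S t)
      obtain ⟨t, htT, htN⟩ := hab.exists_gt N
      have hsub1 : topSet k (X t a) ⊆ SfSet p q S a b := by
        intro l hl
        exact hN t htN.le htT l (topSub hS htT hl)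
      have hsub2 : SfSet p q S a b ⊆ {l | w < Xinf a l} := fun l hl => hex l hl
      exact le_trans (topSet_card_ge hkn (X t a))
        (Set.ncard_le_ncard (hsub1.trans hsub2) (Set.toFinite _))
    -- j' lies in S t infinitely often along (a,c)-times
    have hj'T : {t | t ∈ Tset p q a c ∧ j' ∈ S t}.Infinite := hj'c
    -- split : j' is infinitely often in the top set of row a or of row c
    have hU : {t | t ∈ Tset p q a c ∧ j' ∈ S t} ⊆
        {t | (t ∈ Tset p q a c ∧ j' ∈ S t) ∧ j' ∈ topSet k (X t a)} ∪
        {t | (t ∈ Tset p q a c ∧ j' ∈ S t) ∧ j' ∈ topSet k (X t c)} := by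
      intro t ht
      obtain ⟨htT, htS⟩ := ht
      have := htS
      rw [S_eq hS htT] at this
      rcases this with h | h
      · exact Or.inl ⟨⟨htT, htS⟩, h⟩
      · exact Or.inr ⟨⟨htT, htS⟩, h⟩
    have hUV := (hj'T.mono hU)
    rw [Set.infinite_union] at hUV
    rcases hUV with hUa | hUc
    · -- j' infinitely often top of row a : j' ∈ topSet k (Xinf a), contradiction with step 1
      have hA : j' ∈ topSet k (Xinf a) :=
        lemA (hlim a) hUa (fun t ht => ht.2)
      have hA' : {l | Xinf a j' < Xinf a l}.ncard < k := hA
      rw [hv'] at hA'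
      omega
    · -- j' infinitely often top of row c
      have hAc : j' ∈ topSet k (Xinf c) :=
        lemA (hlim c) hUc (fun t ht => ht.2)
      have hAc' : {l | Xinf c j' < Xinf c l}.ncard < k := hAc
      have hacj : Xinf a j' = Xinf c j' := eqOnSf hX1 hlim hj'c
      -- the set D of coordinates infinitely often in the top set of row a at (a,c)-times
      set D := {l : Fin n | {t | t ∈ Tset p q a c ∧ l ∈ topSet k (X t a)}.Infinite} with hD
      have hDcard : k ≤ D.ncard := by
        obtain ⟨N, hN⟩ := evLemma (Tset p q a c) (fun (l : Fin n) t => l ∈ topSet k (X t a))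
        obtain ⟨t, htT, htN⟩ := hac.exists_gt N
        have hsub : topSet k (X t a) ⊆ D := fun l hl => hN t htN.le htT l hl
        exact le_trans (topSet_card_ge hkn (X t a))
          (Set.ncard_le_ncard hsub (Set.toFinite _))
      have hDSf : D ⊆ SfSet p q S a c := by
        intro l hl
        refine Set.Infinite.mono ?_ hl
        intro t ht
        exact ⟨ht.1, topSub hS ht.1 ht.2⟩
      have hDtop : D ⊆ topSet k (Xinf a) := fun l hl =>
        lemA (hlim a) hl (fun t ht => ht.2)
      have hDgt : ∀ l ∈ D, w < Xinf a l := by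
        intro l hl
        by_contra hle
        push_neg at hle
        have hsub : {l' | w < Xinf a l'} ⊆ {l' | Xinf a l < Xinf a l'} :=
          fun l' hl' => lt_of_le_of_lt hle hl'
        have : k ≤ {l' | Xinf a l < Xinf a l'}.ncard :=
          le_trans hstep1 (Set.ncard_le_ncard hsub (Set.toFinite _))
        have hlt : {l' | Xinf a l < Xinf a l'}.ncard < k := hDtop hl
        omega
      have hDc : D ⊆ {l | Xinf c j' < Xinf c l} := by
        intro l hl
        have h1 : Xinf a l = Xinf c l := eqOnSf hX1 hlim (hDSf hl)
        have h2 : w < Xinf a l := hDgt l hl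
        show Xinf c j' < Xinf c l
        rw [← h1, ← hacj, hv']
        exact h2
      have : k ≤ {l | Xinf c j' < Xinf c l}.ncard :=
        le_trans hDcard (Set.ncard_le_ncard hDc (Set.toFinite _))
      omega

lemma alpha_symm
    (hX1 : ∀ t (i : Fin m) (j : Fin n), (i = p t ∨ i = q t) → j ∈ S t →
      X (t + 1) i j = (X t (p t) j + X t (q t) j) / 2)
    (hlim : ∀ (i : Fin m) (j : Fin n),
      Tendsto (fun t => X t i j) atTop (𝓝 (Xinf i j)))
    (a b : Fin m) : alphaVal p q S Xinf a b = alphaVal p q S Xinf b a := by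
  unfold alphaVal
  have h1 : (fun j => Xinf a j) '' SfSet p q S a b
      = (fun j => Xinf b j) '' SfSet p q S a b :=
    Set.image_congr fun j hj => eqOnSf hX1 hlim hj
  rw [h1, Sf_symm]

end Main

/-- In the generalized top-k selective gossiping trajectory with
connected connectivity graph, the value α_{i₁i₂} = min_{j ∈ S^∞_{i₁i₂}} X_{i₁j}(∞)
is the same for every edge {i₁,i₂} of the connectivity graph. -/
theorem stmt11 (m n k : ℕ) (hm : 2 ≤ m) (hk : 1 ≤ k) (hkn : k ≤ n)
    (p q : ℕ → Fin m) (hpq : ∀ t, p t ≠ q t)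
    (X : ℕ → Fin m → Fin n → ℝ)
    (S : ℕ → Set (Fin n))
    (hS : ∀ t, S t = topSet k (X t (p t)) ∪ topSet k (X t (q t)))
    (hX1 : ∀ t (i : Fin m) (j : Fin n), (i = p t ∨ i = q t) → j ∈ S t →
      X (t + 1) i j = (X t (p t) j + X t (q t) j) / 2)
    (hX2 : ∀ t (i : Fin m) (j : Fin n), ¬((i = p t ∨ i = q t) ∧ j ∈ S t) →
      X (t + 1) i j = X t i j)
    (hconn : (SimpleGraph.fromRel (fun a b =>
      {t : ℕ | (p t = a ∧ q t = b) ∨ (p t = b ∧ q t = a)}.Infinite)).Connected)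
    (Xinf : Fin m → Fin n → ℝ)
    (hlim : ∀ (i : Fin m) (j : Fin n),
      Tendsto (fun t => X t i j) atTop (𝓝 (Xinf i j))) :
    ∀ i₁ i₂ i₁' i₂' : Fin m, i₁ ≠ i₂ → i₁' ≠ i₂' →
      {t : ℕ | (p t = i₁ ∧ q t = i₂) ∨ (p t = i₂ ∧ q t = i₁)}.Infinite →
      {t : ℕ | (p t = i₁' ∧ q t = i₂') ∨ (p t = i₂' ∧ q t = i₁')}.Infinite →
      sInf ((fun j => Xinf i₁ j) '' {j : Fin n |
        {t : ℕ | ((p t = i₁ ∧ q t = i₂) ∨ (p t = i₂ ∧ q t = i₁)) ∧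
          j ∈ S t}.Infinite}) =
      sInf ((fun j => Xinf i₁' j) '' {j : Fin n |
        {t : ℕ | ((p t = i₁' ∧ q t = i₂') ∨ (p t = i₂' ∧ q t = i₁')) ∧
          j ∈ S t}.Infinite}) := by
  intro i₁ i₂ i₁' i₂' h12 h12' hinf hinf'
  have hinfT : (Tset p q i₁ i₂).Infinite := hinf
  have hinfT' : (Tset p q i₁' i₂').Infinite := hinf'
  have keyeq : ∀ a b c : Fin m, (Tset p q a b).Infinite → (Tset p q a c).Infinite →
      alphaVal p q S Xinf a b = alphaVal p q S Xinf a c := fun a b c hab hac =>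
    le_antisymm (bigStep hk hkn hS hX1 hlim hab hac) (bigStep hk hkn hS hX1 hlim hac hab)
  have walkkey : ∀ (x y : Fin m) (_ : (SimpleGraph.fromRel (fun a b =>
        {t : ℕ | (p t = a ∧ q t = b) ∨ (p t = b ∧ q t = a)}.Infinite)).Walk x y)
      (z z' : Fin m), (Tset p q x z).Infinite → (Tset p q y z').Infinite →
      alphaVal p q S Xinf x z = alphaVal p q S Xinf y z' := by
    intro x y w
    induction w with
    | nil =>
      intro z z' h1 h2
      exact keyeq _ _ _ h1 h2
    | @cons x u y hadj w ih =>
      intro z z' h1 h2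
      obtain ⟨hne, hr⟩ := hadj
      have hxu : (Tset p q x u).Infinite := by
        rcases hr with h | h
        · exact h
        · rw [Tset_symm]; exact h
      calc alphaVal p q S Xinf x z = alphaVal p q S Xinf x u := keyeq _ _ _ h1 hxu
        _ = alphaVal p q S Xinf u x := alpha_symm hX1 hlim x u
        _ = alphaVal p q S Xinf y z' := ih x z' (by rw [Tset_symm]; exact hxu) h2
  obtain ⟨w⟩ := hconn.preconnected i₁ i₁'
  exact walkkey i₁ i₁' w i₂ i₂' hinfT hinfT'
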